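/- Under the assumptions that each test statistic T_k (k = 2,…,K) is exactly standard normal conditionally on the data from folds 1,…,k−1, the sequential p-value p_seq = 2Φ(−|(1/√(K−1)) ∑_{k=2}^K T_k|) is uniformly distributed on [0,1]. -/

import Mathlib

open MeasureTheory ProbabilityTheory Real Set
open scoped ENNReal NNReal

local notation "ν" => gaussianReal 0 1

section Aux


lemma conv_pdfReal (a b : ℝ≥0) (ha : a ≠ 0) (hb : b ≠ 0) (t : ℝ) :
    ∫ x, gaussianPDFReal 0 a x * gaussianPDFReal x b t
      = gaussianPDFReal 0 (a + b) t := by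
  have hA : (0:ℝ) < a := lt_of_le_of_ne a.coe_nonneg (by exact_mod_cast (Ne.symm ha))
  have hB : (0:ℝ) < b := lt_of_le_of_ne b.coe_nonneg (by exact_mod_cast (Ne.symm hb))
  set A := (a:ℝ); set B := (b:ℝ)
  set c : ℝ := (A + B) / (2 * A * B) with hc
  have hcpos : 0 < c := by positivity
  set m : ℝ := A * t / (A + B) with hm
  have key : ∀ x, gaussianPDFReal 0 a x * gaussianPDFReal x b t
      = (√(2 * π * A))⁻¹ * (√(2 * π * B))⁻¹ * rexp (- t^2 / (2 * (A + B)))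
        * rexp (-c * (x - m)^2) := by
    intro x
    simp only [gaussianPDFReal]
    rw [show ∀ p q r s : ℝ, (p * q) * (r * s) = (p * r) * (q * s) by intros; ring,
      ← Real.exp_add]
    rw [show (√(2 * π * A))⁻¹ * (√(2 * π * B))⁻¹ * rexp (-t ^ 2 / (2 * (A + B)))
        * rexp (-c * (x - m) ^ 2)
      = (√(2 * π * A))⁻¹ * (√(2 * π * B))⁻¹
        * (rexp (-t ^ 2 / (2 * (A + B))) * rexp (-c * (x - m) ^ 2)) by ring, ← Real.exp_add]
    congr 1
    have hAB : (0:ℝ) < A + B := by positivity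
    congr 1
    rw [hc, hm]
    simp only [A, B]
    have ha' : (a:ℝ) ≠ 0 := hA.ne'
    have hb' : (b:ℝ) ≠ 0 := hB.ne'
    have hab' : (a:ℝ) + b ≠ 0 := hAB.ne'
    field_simp
    ring
  calc ∫ x, gaussianPDFReal 0 a x * gaussianPDFReal x b t
      = ∫ x, (√(2 * π * A))⁻¹ * (√(2 * π * B))⁻¹ * rexp (- t^2 / (2 * (A + B)))
          * rexp (-c * (x - m)^2) := by
        exact integral_congr_ae (Filter.Eventually.of_forall key)
    _ = (√(2 * π * A))⁻¹ * (√(2 * π * B))⁻¹ * rexp (- t^2 / (2 * (A + B)))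
          * ∫ x, rexp (-c * (x - m)^2) := by rw [integral_const_mul]
    _ = (√(2 * π * A))⁻¹ * (√(2 * π * B))⁻¹ * rexp (- t^2 / (2 * (A + B))) * √(π / c) := by
        rw [integral_sub_right_eq_self (fun y => rexp (-c * y^2)) m, integral_gaussian]
    _ = gaussianPDFReal 0 (a + b) t := by
        simp only [gaussianPDFReal, NNReal.coe_add, sub_zero]
        rw [show ((a:ℝ) + b) = A + B from rfl]
        rw [show (√(2 * π * A))⁻¹ * (√(2 * π * B))⁻¹ * rexp (-t ^ 2 / (2 * (A + B))) * √(π / c)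
          = ((√(2 * π * A))⁻¹ * (√(2 * π * B))⁻¹ * √(π / c)) * rexp (-t ^ 2 / (2 * (A + B)))
            by ring]
        congr 1
        rw [← Real.sqrt_inv, ← Real.sqrt_inv, ← Real.sqrt_mul (by positivity),
          ← Real.sqrt_mul (by positivity), ← Real.sqrt_inv]
        congr 1
        have hAB : (0:ℝ) < A + B := by positivity
        rw [hc]
        field_simp

lemma meas_pdf_prod (b : ℝ≥0) : Measurable (fun p : ℝ × ℝ => gaussianPDF p.1 b p.2) := by
  unfold gaussianPDF gaussianPDFReal
  exact (((((measurable_snd.sub measurable_fst).pow_const 2).neg.div_const _).exp).const_mul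
    _).ennreal_ofReal

lemma conv_pdf (a b : ℝ≥0) (ha : a ≠ 0) (hb : b ≠ 0) (t : ℝ) :
    ∫⁻ x, gaussianPDF 0 a x * gaussianPDF x b t = gaussianPDF 0 (a + b) t := by
  have hnn : ∀ x, 0 ≤ gaussianPDFReal 0 a x * gaussianPDFReal x b t :=
    fun x => mul_nonneg (gaussianPDFReal_nonneg _ _ _) (gaussianPDFReal_nonneg _ _ _)
  have hmb : Measurable (fun x => gaussianPDFReal x b t) := by
    unfold gaussianPDFReal
    exact ((((measurable_const.sub measurable_id).pow_const 2).neg.div_const _).exp).const_mul _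
  have hint : Integrable (fun x => gaussianPDFReal 0 a x * gaussianPDFReal x b t) := by
    have hb' : (0:ℝ) < b := lt_of_le_of_ne b.coe_nonneg (by exact_mod_cast (Ne.symm hb))
    have hM : ∀ x, ‖gaussianPDFReal 0 a x * gaussianPDFReal x b t‖
        ≤ ‖(√(2 * π * b))⁻¹ * gaussianPDFReal 0 a x‖ := by
      intro x
      rw [Real.norm_eq_abs, Real.norm_eq_abs, abs_of_nonneg (hnn x),
        abs_of_nonneg (mul_nonneg (by positivity) (gaussianPDFReal_nonneg _ _ _)), mul_comm]
      refine mul_le_mul_of_nonneg_right ?_ (gaussianPDFReal_nonneg _ _ _)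
      unfold gaussianPDFReal
      refine mul_le_of_le_one_right (by positivity) (Real.exp_le_one_iff.2 ?_)
      have h1 : (0:ℝ) ≤ (t - x)^2 / (2 * b) := by positivity
      have h2 : -(t - x) ^ 2 / (2 * (b:ℝ)) = -((t - x) ^ 2 / (2 * b)) := by ring
      linarith [h2.le]
    exact Integrable.mono ((integrable_gaussianPDFReal 0 a).const_mul _)
      (((measurable_gaussianPDFReal 0 a).mul hmb).aestronglyMeasurable)
      (Filter.Eventually.of_forall hM)
  simp only [gaussianPDF]
  rw [show (fun x => ENNReal.ofReal (gaussianPDFReal 0 a x)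
        * ENNReal.ofReal (gaussianPDFReal x b t))
      = fun x => ENNReal.ofReal (gaussianPDFReal 0 a x * gaussianPDFReal x b t) by
    funext x; rw [ENNReal.ofReal_mul (gaussianPDFReal_nonneg _ _ _)]]
  rw [← ofReal_integral_eq_lintegral_ofReal hint (Filter.Eventually.of_forall hnn),
    conv_pdfReal a b ha hb t]

lemma gaussian_conv (a b : ℝ≥0) (ha : a ≠ 0) (hb : b ≠ 0) :
    ((gaussianReal 0 a).prod (gaussianReal 0 b)).map (fun p : ℝ × ℝ => p.1 + p.2)
      = gaussianReal 0 (a + b) := by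
  have hab : a + b ≠ 0 := by simp [ha]
  ext s hs
  rw [Measure.map_apply measurable_add hs, Measure.prod_apply (measurable_add hs)]
  have h1 : ∀ x : ℝ, gaussianReal 0 b (Prod.mk x ⁻¹' ((fun p : ℝ × ℝ => p.1 + p.2) ⁻¹' s))
      = ∫⁻ t in s, gaussianPDF x b t := by
    intro x
    have h : (Prod.mk x ⁻¹' ((fun p : ℝ × ℝ => p.1 + p.2) ⁻¹' s)) = (x + ·) ⁻¹' s := rfl
    rw [h, ← Measure.map_apply (measurable_const_add x) hs, gaussianReal_map_const_add,
      zero_add, gaussianReal_apply _ hb]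
  simp_rw [h1]
  have hmeas : Measurable fun x => ∫⁻ t in s, gaussianPDF x b t :=
    Measurable.lintegral_prod_right' (f := fun p : ℝ × ℝ => gaussianPDF p.1 b p.2)
      (meas_pdf_prod b)
  rw [gaussianReal_of_var_ne_zero _ ha,
    lintegral_withDensity_eq_lintegral_mul _ (measurable_gaussianPDF 0 a) hmeas]
  have h2 : ∀ x, gaussianPDF 0 a x * ∫⁻ t in s, gaussianPDF x b t
      = ∫⁻ t in s, gaussianPDF 0 a x * gaussianPDF x b t := by
    intro x
    rw [lintegral_const_mul _ (by
      unfold gaussianPDF gaussianPDFReal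
      exact ((((measurable_id.sub measurable_const).pow_const 2).neg.div_const _).exp).const_mul
        _ |>.ennreal_ofReal)]
  simp only [Pi.mul_apply]
  simp_rw [h2]
  rw [lintegral_lintegral_swap (by exact (((measurable_gaussianPDF 0 a).comp measurable_fst).mul (meas_pdf_prod b)).aemeasurable)]
  rw [gaussianReal_apply _ hab]
  exact setLIntegral_congr_fun hs (fun t _ => conv_pdf a b ha hb t)

variable {Ω : Type*} {mΩ : MeasurableSpace Ω} (μ : Measure Ω) [IsProbabilityMeasure μ]

lemma cond_indep_key (F : Filtration ℕ mΩ) (n : ℕ) (X : Ω → ℝ) (hX : Measurable[mΩ] X)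
    (h : ∀ s : Set ℝ, MeasurableSet s →
      μ[(X ⁻¹' s).indicator (fun _ => (1 : ℝ)) | F n] =ᵐ[μ] fun _ => (gaussianReal 0 1 s).toReal)
    (s : Set ℝ) (hs : MeasurableSet s) {B : Set Ω} (hB : MeasurableSet[F n] B) :
    μ (X ⁻¹' s ∩ B) = gaussianReal 0 1 s * μ B := by
  have hA : MeasurableSet[mΩ] (X ⁻¹' s) := hX hs
  have hint : Integrable ((X ⁻¹' s).indicator (fun _ => (1 : ℝ))) μ :=
    (integrable_const (1 : ℝ)).indicator hA
  have h1 : ∫ ω in B, (X ⁻¹' s).indicator (fun _ => (1 : ℝ)) ω ∂μ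
      = ∫ ω in B, (gaussianReal 0 1 s).toReal ∂μ := by
    rw [← setIntegral_condExp (F.le n) hint hB]
    exact setIntegral_congr_ae (F.le n _ hB) ((h s hs).mono fun ω hω _ => hω)
  rw [setIntegral_indicator hA, setIntegral_const, setIntegral_const, smul_eq_mul, smul_eq_mul,
    mul_one] at h1
  have hfin : gaussianReal 0 1 s * μ B ≠ ⊤ :=
    ENNReal.mul_ne_top (measure_ne_top _ _) (measure_ne_top _ _)
  rw [Set.inter_comm, ← ENNReal.ofReal_toReal (measure_ne_top μ (B ∩ X ⁻¹' s)),
    ← ENNReal.ofReal_toReal hfin, ← measureReal_def, h1, ENNReal.toReal_mul, measureReal_def, mul_comm]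

lemma map_eq_gaussian (F : Filtration ℕ mΩ) (n : ℕ) (X : Ω → ℝ) (hX : Measurable[mΩ] X)
    (h : ∀ s : Set ℝ, MeasurableSet s →
      μ[(X ⁻¹' s).indicator (fun _ => (1 : ℝ)) | F n] =ᵐ[μ] fun _ => (gaussianReal 0 1 s).toReal) :
    μ.map X = gaussianReal 0 1 := by
  ext s hs
  rw [Measure.map_apply hX hs]
  have := cond_indep_key μ F n X hX h s hs MeasurableSet.univ
  simpa using this

lemma indep_of_cond (F : Filtration ℕ mΩ) (n : ℕ) (X Y : Ω → ℝ) (hX : Measurable[mΩ] X)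
    (hYG : Measurable[F n] Y)
    (h : ∀ s : Set ℝ, MeasurableSet s →
      μ[(X ⁻¹' s).indicator (fun _ => (1 : ℝ)) | F n] =ᵐ[μ] fun _ => (gaussianReal 0 1 s).toReal) :
    IndepFun Y X μ := by
  rw [indepFun_iff_measure_inter_preimage_eq_mul]
  intro u s hu hs
  rw [Set.inter_comm, cond_indep_key μ F n X hX h s hs (hYG hu)]
  have hXs : μ (X ⁻¹' s) = gaussianReal 0 1 s := by
    have := cond_indep_key μ F n X hX h s hs MeasurableSet.univ
    simpa using this
  rw [hXs, mul_comm]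

lemma map_sum_gaussian
    (K : ℕ) (hK : 2 ≤ K)
    (F : Filtration ℕ mΩ) (T : ℕ → Ω → ℝ)
    (hAdapted : ∀ k, Measurable[F k] (T k))
    (hCondGauss : ∀ k, 2 ≤ k → k ≤ K → ∀ s : Set ℝ, MeasurableSet s →
      μ[(T k ⁻¹' s).indicator (fun _ => (1 : ℝ)) | F (k - 1)]
        =ᵐ[μ] fun _ => (gaussianReal 0 1 s).toReal) :
    ∀ m, 2 ≤ m → m ≤ K →
      μ.map (fun ω => ∑ k ∈ Finset.Icc 2 m, T k ω) = gaussianReal 0 ((m - 1 : ℕ) : ℝ≥0) := by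
  intro m hm
  induction m, hm using Nat.le_induction with
  | base =>
    intro _
    simp only [Finset.Icc_self, Finset.sum_singleton]
    have := map_eq_gaussian μ F 1 (T 2) ((hAdapted 2).mono (F.le 2) le_rfl)
      (hCondGauss 2 le_rfl hK)
    simpa using this
  | succ n hn IH =>
    intro hnK
    have hnK' : n ≤ K := le_of_lt (Nat.lt_of_succ_le hnK)
    have hmap := IH hnK'
    have hT : ∀ k, Measurable (T k) := fun k => (hAdapted k).mono (F.le k) le_rfl
    have hSmeas : Measurable (fun ω => ∑ k ∈ Finset.Icc 2 n, T k ω) :=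
      Finset.measurable_sum _ fun k _ => hT k
    have hSG : Measurable[F n] (fun ω => ∑ k ∈ Finset.Icc 2 n, T k ω) :=
      Finset.measurable_sum _ fun k hk =>
        (hAdapted k).mono (F.mono (Finset.mem_Icc.1 hk).2) le_rfl
    have hIndep : IndepFun (fun ω => ∑ k ∈ Finset.Icc 2 n, T k ω) (T (n + 1)) μ :=
      indep_of_cond μ F n (T (n + 1)) _ (hT (n + 1)) hSG
        (hCondGauss (n + 1) (by omega) hnK)
    have hsum : (fun ω => ∑ k ∈ Finset.Icc 2 (n + 1), T k ω)
        = fun ω => (∑ k ∈ Finset.Icc 2 n, T k ω) + T (n + 1) ω := by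
      funext ω
      exact Finset.sum_Icc_succ_top (by omega) _
    rw [hsum]
    have hcomp : (fun ω => (∑ k ∈ Finset.Icc 2 n, T k ω) + T (n + 1) ω)
        = (fun p : ℝ × ℝ => p.1 + p.2)
          ∘ (fun ω => ((∑ k ∈ Finset.Icc 2 n, T k ω), T (n + 1) ω)) := rfl
    rw [hcomp, ← Measure.map_map measurable_add (hSmeas.prodMk (hT (n + 1))),
      (indepFun_iff_map_prod_eq_prod_map_map hSmeas.aemeasurable
        (hT (n + 1)).aemeasurable).1 hIndep,
      hmap, map_eq_gaussian μ F n (T (n + 1)) (hT (n + 1))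
        (hCondGauss (n + 1) (by omega) hnK),
      gaussian_conv _ _ (Nat.cast_ne_zero.2 (by omega)) one_ne_zero]
    congr 1
    have : (n - 1) + 1 = n + 1 - 1 := by omega
    rw [← this]
    push_cast
    ring


lemma gauss_neg : (gaussianReal 0 1).map (fun x => -x) = gaussianReal 0 1 := by
  have h : (fun x : ℝ => -x) = ((-1 : ℝ) * ·) := by funext x; ring
  have hv : (.mk ((-1:ℝ)^2) (sq_nonneg _) : ℝ≥0) * 1 = 1 := by ext; norm_num
  rw [h, gaussianReal_map_const_mul, hv, mul_zero]

lemma gauss_Ici (x : ℝ) : ν (Ici x) = ν (Iic (-x)) := by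
  conv_lhs => rw [← gauss_neg]
  rw [Measure.map_apply measurable_neg measurableSet_Ici]
  congr 1
  ext y
  simp [neg_le]

lemma gauss_singleton (x : ℝ) : ν {x} = 0 :=
  gaussianReal_absolutelyContinuous 0 one_ne_zero (volume_singleton)

lemma gauss_pos {s : Set ℝ} (hs : volume s ≠ 0) : ν s ≠ 0 :=
  fun h => hs (gaussianReal_absolutelyContinuous' 0 one_ne_zero h)

lemma gauss_cdf_pos (x : ℝ) : 0 < cdf ν x := by
  rw [cdf_eq_real, measureReal_def]
  refine ENNReal.toReal_pos (gauss_pos ?_) (measure_ne_top _ _)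
  simp [Real.volume_Iic]

lemma gauss_cdf_strictMono : StrictMono (cdf ν) := by
  intro a b hab
  rw [cdf_eq_real, cdf_eq_real, measureReal_def, measureReal_def]
  have hdisj : Disjoint (Iic a) (Ioc a b) := by
    rw [Set.disjoint_left]
    intro x hx hx2
    exact absurd (Set.mem_Ioc.1 hx2).1 (not_lt.2 (Set.mem_Iic.1 hx))
  have hsplit : ν (Iic b) = ν (Iic a) + ν (Ioc a b) := by
    rw [← measure_union hdisj measurableSet_Ioc, Set.Iic_union_Ioc_eq_Iic hab.le]
  have hpos : 0 < ν (Ioc a b) := by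
    refine pos_iff_ne_zero.2 (gauss_pos ?_)
    rw [Real.volume_Ioc]
    exact (ENNReal.ofReal_pos.2 (by linarith)).ne'
  refine (ENNReal.toReal_lt_toReal (measure_ne_top _ _) (measure_ne_top _ _)).2 ?_
  rw [hsplit]
  exact ENNReal.lt_add_right (measure_ne_top _ _) hpos.ne'

lemma gauss_Ioi (x : ℝ) : ν (Ioi x) = ν (Iic (-x)) := by
  have e : Ioi x = Ici x \ {x} := by
    ext y
    simp only [Set.mem_Ioi, Set.mem_diff, Set.mem_Ici, Set.mem_singleton_iff]
    constructor
    · intro h; exact ⟨h.le, fun h2 => by simp [h2] at h⟩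
    · intro ⟨h1, h2⟩; exact lt_of_le_of_ne h1 (Ne.symm h2)
  rw [e, measure_diff_null (gauss_singleton x), gauss_Ici]

lemma gauss_cdf_zero : cdf ν 0 = 1 / 2 := by
  have hdisj : Disjoint (Iic (0:ℝ)) (Ioi 0) := by
    rw [Set.disjoint_left]
    intro x hx hx2
    exact absurd (Set.mem_Ioi.1 hx2) (not_lt.2 (Set.mem_Iic.1 hx))
  have h1 : ν (Iic 0) + ν (Ioi 0) = 1 := by
    rw [← measure_union hdisj measurableSet_Ioi, Set.Iic_union_Ioi, measure_univ]
  rw [gauss_Ioi, neg_zero] at h1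
  have := congrArg ENNReal.toReal h1
  rw [ENNReal.toReal_add (measure_ne_top _ _) (measure_ne_top _ _), ENNReal.toReal_one] at this
  rw [cdf_eq_real, measureReal_def]
  linarith

lemma gauss_cdf_lipschitz : LipschitzWith (Real.toNNReal ((√(2 * π))⁻¹)) (cdf ν) := by
  have hbound : ∀ a b : ℝ, a ≤ b → cdf ν b - cdf ν a ≤ (√(2 * π))⁻¹ * (b - a) := by
    intro a b hab
    rw [cdf_eq_real, cdf_eq_real, measureReal_def, measureReal_def]
    have hdisj : Disjoint (Iic a) (Ioc a b) := by
      rw [Set.disjoint_left]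
      intro x hx hx2
      exact absurd (Set.mem_Ioc.1 hx2).1 (not_lt.2 (Set.mem_Iic.1 hx))
    have hsplit : ν (Iic b) = ν (Iic a) + ν (Ioc a b) := by
      rw [← measure_union hdisj measurableSet_Ioc, Set.Iic_union_Ioc_eq_Iic hab]
    rw [hsplit, ENNReal.toReal_add (measure_ne_top _ _) (measure_ne_top _ _)]
    rw [add_sub_cancel_left]
    have hIoc : ν (Ioc a b) ≤ ENNReal.ofReal ((√(2 * π))⁻¹ * (b - a)) := by
      rw [gaussianReal_apply _ one_ne_zero]
      calc ∫⁻ x in Ioc a b, gaussianPDF 0 1 x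
          ≤ ∫⁻ _ in Ioc a b, ENNReal.ofReal ((√(2 * π))⁻¹) := by
            refine setLIntegral_mono measurable_const fun x _ => ?_
            unfold gaussianPDF gaussianPDFReal
            refine ENNReal.ofReal_le_ofReal ?_
            push_cast
            rw [mul_one]
            refine mul_le_of_le_one_right (by positivity) (Real.exp_le_one_iff.2 ?_)
            have h1 : (0:ℝ) ≤ (x - 0)^2 / (2 * 1) := by positivity
            have h2 : -(x - 0) ^ 2 / (2 * (1:ℝ)) = -((x - 0) ^ 2 / (2 * 1)) := by ring
            linarith [h2.le]
        _ = ENNReal.ofReal ((√(2 * π))⁻¹ * (b - a)) := by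
            rw [setLIntegral_const, Real.volume_Ioc, ← ENNReal.ofReal_mul (by positivity)]
    calc (ν (Ioc a b)).toReal ≤ (ENNReal.ofReal ((√(2 * π))⁻¹ * (b - a))).toReal :=
          ENNReal.toReal_mono ENNReal.ofReal_ne_top hIoc
      _ ≤ (√(2 * π))⁻¹ * (b - a) := le_of_eq (ENNReal.toReal_ofReal (mul_nonneg (by positivity) (by linarith)))
  refine LipschitzWith.of_dist_le_mul fun a b => ?_
  rcases le_total a b with h | h
  · rw [Real.dist_eq, Real.dist_eq, abs_of_nonpos (by linarith [(monotone_cdf ν) h]),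
      abs_of_nonpos (by linarith)]
    have := hbound a b h
    rw [Real.coe_toNNReal _ (by positivity)]
    linarith
  · rw [Real.dist_eq, Real.dist_eq, abs_of_nonneg (by linarith [(monotone_cdf ν) h]),
      abs_of_nonneg (by linarith)]
    have := hbound b a h
    rw [Real.coe_toNNReal _ (by positivity)]
    linarith

lemma gauss_map_uniform :
    (gaussianReal 0 1).map (fun x => 2 * cdf (gaussianReal 0 1) (-|x|))
      = volume.restrict (Set.Icc (0 : ℝ) 1) := by
  have hΦcont : Continuous (cdf ν) := gauss_cdf_lipschitz.continuous
  have hg : Measurable (fun x : ℝ => 2 * cdf ν (-|x|)) :=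
    ((hΦcont.comp continuous_abs.neg).measurable).const_mul 2
  haveI : IsProbabilityMeasure ((gaussianReal 0 1).map (fun x => 2 * cdf ν (-|x|))) :=
    Measure.isProbabilityMeasure_map hg.aemeasurable
  refine Measure.ext_of_Iic _ _ fun a => ?_
  rw [Measure.map_apply hg measurableSet_Iic, Measure.restrict_apply measurableSet_Iic]
  by_cases ha0 : a ≤ 0
  · have hL : (fun x : ℝ => 2 * cdf ν (-|x|)) ⁻¹' Iic a = ∅ := by
      rw [Set.eq_empty_iff_forall_notMem]
      intro x hx
      rw [Set.mem_preimage, Set.mem_Iic] at hx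
      have := gauss_cdf_pos (-|x|)
      linarith
    rw [hL, measure_empty]
    refine (measure_mono_null (t := Set.Icc (0:ℝ) a)
      (fun x hx => Set.mem_Icc.2 ⟨hx.2.1, hx.1⟩) ?_).symm
    rw [Real.volume_Icc]
    exact ENNReal.ofReal_eq_zero.2 (by linarith)
  push_neg at ha0
  by_cases ha1 : 1 ≤ a
  · have hL : (fun x : ℝ => 2 * cdf ν (-|x|)) ⁻¹' Iic a = Set.univ := by
      rw [Set.eq_univ_iff_forall]
      intro x
      rw [Set.mem_preimage, Set.mem_Iic]
      have h1 : cdf ν (-|x|) ≤ cdf ν 0 := (monotone_cdf ν) (by simp [abs_nonneg])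
      rw [gauss_cdf_zero] at h1
      linarith
    have hR : Iic a ∩ Icc (0:ℝ) 1 = Icc 0 1 :=
      Set.inter_eq_right.2 (fun x hx => le_trans hx.2 ha1)
    rw [hL, measure_univ, hR, Real.volume_Icc]
    norm_num
  push_neg at ha1
  -- 0 < a < 1
  obtain ⟨l, hl⟩ := ((tendsto_cdf_atBot ν).eventually_lt_const (half_pos ha0)).exists
  obtain ⟨u, hu⟩ := ((tendsto_cdf_atTop ν).eventually_const_lt (by linarith : a / 2 < 1)).exists
  have hlu : l ≤ u := by
    by_contra h
    have := (monotone_cdf ν) (le_of_not_ge h)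
    linarith
  obtain ⟨q, _, hq⟩ : ∃ q ∈ Icc l u, cdf ν q = a / 2 :=
    intermediate_value_Icc hlu hΦcont.continuousOn ⟨hl.le, hu.le⟩
  have hq0 : q < 0 := by
    by_contra h
    have := (monotone_cdf ν) (le_of_not_gt h)
    rw [gauss_cdf_zero] at this
    linarith
  have hL : (fun x : ℝ => 2 * cdf ν (-|x|)) ⁻¹' Iic a = Iic q ∪ Ici (-q) := by
    ext x
    rw [Set.mem_preimage, Set.mem_Iic, Set.mem_union, Set.mem_Iic, Set.mem_Ici]
    constructor
    · intro hx
      have h1 : cdf ν (-|x|) ≤ cdf ν q := by rw [hq]; linarith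
      have h2 : -|x| ≤ q := (gauss_cdf_strictMono.le_iff_le).1 h1
      rcases (le_abs.1 (neg_le.1 h2)) with h | h
      · right; exact h
      · left; linarith
    · intro hx
      have h2 : -q ≤ |x| := by
        rcases hx with h | h
        · exact le_trans (by linarith) (neg_le_abs x)
        · exact le_abs.2 (Or.inl h)
      have h1 : cdf ν (-|x|) ≤ cdf ν q := (gauss_cdf_strictMono.le_iff_le).2 (by linarith)
      rw [hq] at h1
      linarith
  have hdisj : Disjoint (Iic q) (Ici (-q)) := by
    rw [Set.disjoint_left]
    intro x hx hx2
    rw [Set.mem_Iic] at hx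
    rw [Set.mem_Ici] at hx2
    linarith
  rw [hL, measure_union hdisj measurableSet_Ici, gauss_Ici, neg_neg, ← ofReal_cdf ν q, hq,
    ← ENNReal.ofReal_add (by linarith) (by linarith)]
  have hR : Iic a ∩ Icc (0:ℝ) 1 = Icc 0 a := by
    ext x
    rw [Set.mem_inter_iff, Set.mem_Iic, Set.mem_Icc, Set.mem_Icc]
    constructor
    · intro ⟨h1, h2, _⟩; exact ⟨h2, h1⟩
    · intro ⟨h1, h2⟩; exact ⟨h2, h1, by linarith⟩
  rw [hR, Real.volume_Icc]
  norm_num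

end Aux

/-- If each test statistic `T k` (for `k = 2, …, K`) is exactly standard normal
conditionally on the information `F (k-1)` from the previous folds, then the
sequential p-value `p_seq = 2 Φ(-|(1/√(K-1)) ∑_{k=2}^K T_k|)` is uniformly
distributed on `[0,1]`. -/
theorem sequential_pvalue_uniform
    {Ω : Type*} {mΩ : MeasurableSpace Ω} (μ : Measure Ω) [IsProbabilityMeasure μ]
    (K : ℕ) (hK : 2 ≤ K)
    (F : Filtration ℕ mΩ) (T : ℕ → Ω → ℝ)
    (hAdapted : ∀ k, Measurable[F k] (T k))
    (hCondGauss : ∀ k, 2 ≤ k → k ≤ K → ∀ s : Set ℝ, MeasurableSet s →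
      μ[(T k ⁻¹' s).indicator (fun _ => (1 : ℝ)) | F (k - 1)]
        =ᵐ[μ] fun _ => (gaussianReal 0 1 s).toReal) :
    μ.map (fun ω =>
        2 * cdf (gaussianReal 0 1)
          (-|(1 / Real.sqrt (K - 1)) * ∑ k ∈ Finset.Icc 2 K, T k ω|))
      = volume.restrict (Set.Icc (0 : ℝ) 1) := by
  set c : ℝ := 1 / Real.sqrt ((K : ℝ) - 1) with hc
  have hT : ∀ k, Measurable (T k) := fun k => (hAdapted k).mono (F.le k) le_rfl
  have hS : Measurable (fun ω => ∑ k ∈ Finset.Icc 2 K, T k ω) :=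
    Finset.measurable_sum _ fun k _ => hT k
  have h1 : μ.map (fun ω => ∑ k ∈ Finset.Icc 2 K, T k ω)
      = gaussianReal 0 ((K - 1 : ℕ) : ℝ≥0) :=
    map_sum_gaussian μ K hK F T hAdapted hCondGauss K hK le_rfl
  have hKpos : (0 : ℝ) < (K : ℝ) - 1 := by
    have : (2 : ℝ) ≤ (K : ℝ) := by exact_mod_cast hK
    linarith
  have hv : (.mk (c ^ 2) (sq_nonneg _) : ℝ≥0) * ((K - 1 : ℕ) : ℝ≥0) = 1 := by
    have hcast : ((K - 1 : ℕ) : ℝ) = (K : ℝ) - 1 := by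
      have : 1 ≤ K := by omega
      push_cast [Nat.cast_sub this]
      ring
    have hsq : c ^ 2 = ((K : ℝ) - 1)⁻¹ := by
      rw [hc, div_pow, one_pow, Real.sq_sqrt hKpos.le]
      exact one_div _
    refine NNReal.coe_injective ?_
    rw [NNReal.coe_mul, NNReal.coe_one, NNReal.coe_mk, NNReal.coe_natCast, hcast, hsq]
    field_simp
  have h2 : μ.map (fun ω => c * ∑ k ∈ Finset.Icc 2 K, T k ω) = gaussianReal 0 1 := by
    have hcomp : (fun ω => c * ∑ k ∈ Finset.Icc 2 K, T k ω)
        = (c * ·) ∘ (fun ω => ∑ k ∈ Finset.Icc 2 K, T k ω) := rfl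
    rw [hcomp, ← Measure.map_map (measurable_const_mul c) hS, h1,
      gaussianReal_map_const_mul, hv, mul_zero]
  have hΦcont : Continuous (cdf ν) := gauss_cdf_lipschitz.continuous
  have hg : Measurable (fun x : ℝ => 2 * cdf ν (-|x|)) :=
    ((hΦcont.comp continuous_abs.neg).measurable).const_mul 2
  have hcomp2 : (fun ω => 2 * cdf (gaussianReal 0 1)
        (-|(1 / Real.sqrt ((K : ℝ) - 1)) * ∑ k ∈ Finset.Icc 2 K, T k ω|))
      = (fun x : ℝ => 2 * cdf ν (-|x|))
        ∘ (fun ω => c * ∑ k ∈ Finset.Icc 2 K, T k ω) := rfl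
  rw [hcomp2, ← Measure.map_map hg (measurable_const_mul c |>.comp hS |> fun _ =>
    (hS.const_mul c)), h2, gauss_map_uniform]
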